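/- Let g : 2^Ω → ℝ₊ be submodular, ℓ(A) = Σ_{e∈A} ℓ_e a nonnegative modular function, n = |Ω|, S ⊆ Ω, and 0 ≤ i ≤ n−1. Define Ψ_i(S,e) = max(0, (1 − 1/n)^{n−(i+1)} g(e|S) − ℓ_e). Then for any OPT ⊆ Ω, (1/n)·Σ_{e∈Ω} Ψ_i(S,e) ≥ (1/n)·(1 − 1/n)^{n−(i+1)}·(g(OPT ∪ S) − g(S)) − (1/n)·ℓ(OPT). -/

import Mathlib

lemma submod_sum_gain {Ω : Type*} [DecidableEq Ω]
    (g : Finset Ω → ℝ)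
    (hsub : ∀ A B : Finset Ω, g A + g B ≥ g (A ∪ B) + g (A ∩ B))
    (S : Finset Ω) (A : Finset Ω) :
    g (A ∪ S) - g S ≤ ∑ e ∈ A, (g (insert e S) - g S) := by
  classical
  induction A using Finset.induction with
  | empty => simp
  | insert _ _ ha ih =>
    rename_i a A
    rw [Finset.sum_insert ha]
    by_cases haS : a ∈ S
    · have h1 : insert a A ∪ S = A ∪ S := by
        ext x; simp [Finset.mem_insert, Finset.mem_union]
        intro hx; subst hx; tauto
      have h2 : insert a S = S := Finset.insert_eq_self.mpr haS
      rw [h1, h2]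
      linarith
    · by_cases haA : a ∈ A ∪ S
      · exact absurd ((Finset.mem_union.mp haA).resolve_right haS) ha
      · have hkey := hsub (insert a S) (A ∪ S)
        have hu : insert a S ∪ (A ∪ S) = insert a (A ∪ S) := by
          ext x; simp [Finset.mem_insert, Finset.mem_union]; tauto
        have hi : insert a S ∩ (A ∪ S) = S := by
          ext x
          simp only [Finset.mem_inter, Finset.mem_insert, Finset.mem_union]
          constructor
          · rintro ⟨h1 | h1, h2 | h2⟩ <;> first | (subst h1; tauto) | assumption
          · intro hx; tauto
        rw [hu, hi] at hkey
        have hu2 : insert a A ∪ S = insert a (A ∪ S) := by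
          ext x; simp [Finset.mem_insert, Finset.mem_union]
        rw [hu2]
        linarith

/-- lower bound on the average of the distorted truncated gains `Ψ_i(S,·)`. -/
theorem stmt_16 {Ω : Type*} [Fintype Ω] [DecidableEq Ω]
    (g : Finset Ω → ℝ) (hg : ∀ A, 0 ≤ g A)
    (hsub : ∀ A B : Finset Ω, g A + g B ≥ g (A ∪ B) + g (A ∩ B))
    (ℓ : Ω → ℝ) (hℓ : ∀ e, 0 ≤ ℓ e)
    (n : ℕ) (hn : n = Fintype.card Ω)
    (S : Finset Ω) (i : ℕ) (hi : i ≤ n - 1) (hn1 : 1 ≤ n)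
    (OPT : Finset Ω) :
    (1 / (n : ℝ)) * ∑ e : Ω,
        max 0 ((1 - 1 / (n : ℝ)) ^ (n - (i + 1)) * (g (insert e S) - g S) - ℓ e)
      ≥ (1 / (n : ℝ)) * (1 - 1 / (n : ℝ)) ^ (n - (i + 1)) * (g (OPT ∪ S) - g S)
        - (1 / (n : ℝ)) * ∑ e ∈ OPT, ℓ e := by
  set c : ℝ := (1 - 1 / (n : ℝ)) ^ (n - (i + 1)) with hc
  have hnpos : (0 : ℝ) < n := by positivity
  have hcpos : 0 ≤ c := by
    apply pow_nonneg
    have : 1 / (n : ℝ) ≤ 1 := by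
      rw [div_le_one hnpos]; exact_mod_cast hn1
    linarith
  have h1 : ∑ e : Ω, max 0 (c * (g (insert e S) - g S) - ℓ e)
      ≥ ∑ e ∈ OPT, max 0 (c * (g (insert e S) - g S) - ℓ e) := by
    apply Finset.sum_le_sum_of_subset_of_nonneg (Finset.subset_univ OPT)
    intros; exact le_max_left _ _
  have h2 : ∑ e ∈ OPT, max 0 (c * (g (insert e S) - g S) - ℓ e)
      ≥ ∑ e ∈ OPT, (c * (g (insert e S) - g S) - ℓ e) :=
    Finset.sum_le_sum fun e _ => le_max_right _ _
  have h3 := submod_sum_gain g hsub S OPT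
  have h4 : ∑ e ∈ OPT, (c * (g (insert e S) - g S) - ℓ e)
      = c * ∑ e ∈ OPT, (g (insert e S) - g S) - ∑ e ∈ OPT, ℓ e := by
    rw [Finset.sum_sub_distrib, Finset.mul_sum]
  have h5 : c * (g (OPT ∪ S) - g S) ≤ c * ∑ e ∈ OPT, (g (insert e S) - g S) :=
    mul_le_mul_of_nonneg_left h3 hcpos
  have hmain : ∑ e : Ω, max 0 (c * (g (insert e S) - g S) - ℓ e)
      ≥ c * (g (OPT ∪ S) - g S) - ∑ e ∈ OPT, ℓ e := by linarith
  have hinv : 0 ≤ 1 / (n : ℝ) := by positivity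
  calc (1 / (n : ℝ)) * ∑ e : Ω, max 0 (c * (g (insert e S) - g S) - ℓ e)
      ≥ (1 / (n : ℝ)) * (c * (g (OPT ∪ S) - g S) - ∑ e ∈ OPT, ℓ e) :=
        mul_le_mul_of_nonneg_left hmain hinv
    _ = (1 / (n : ℝ)) * c * (g (OPT ∪ S) - g S) - (1 / (n : ℝ)) * ∑ e ∈ OPT, ℓ e := by ring
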